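/- If P and Q are integrally closed lattice simplices with 0 in the interior of P and P reflexive, then the free sum simplex P *_i Q is integrally closed. -/

import Mathlib

/-- `x` is an integer (lattice) point. -/
def isInt {n : ℕ} (x : Fin n → ℝ) : Prop := ∀ j, ∃ z : ℤ, x j = (z : ℝ)

/-- `P` is a lattice polytope: the convex hull of finitely many lattice points. -/
def isLatticePolytope {n : ℕ} (P : Set (Fin n → ℝ)) : Prop :=
  ∃ V : Finset (Fin n → ℝ), (∀ v ∈ V, isInt v) ∧ P = convexHull ℝ (V : Set (Fin n → ℝ))

/-- The polar dual `P^Δ = {y : x·y ≤ 1 for all x ∈ P}`. -/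
def polarDual {n : ℕ} (P : Set (Fin n → ℝ)) : Set (Fin n → ℝ) :=
  {y : Fin n → ℝ | ∀ x ∈ P, ∑ j, x j * y j ≤ 1}

/-- A reflexive polytope (with the origin in its interior). -/
def isReflexive0 {n : ℕ} (P : Set (Fin n → ℝ)) : Prop :=
  isLatticePolytope P ∧ (0 : Fin n → ℝ) ∈ interior P ∧ isLatticePolytope (polarDual P)

/-- A reflexive polytope in the wider sense: a lattice translate of a reflexive
polytope containing the origin in its interior. -/
def isReflexive {n : ℕ} (P : Set (Fin n → ℝ)) : Prop :=
  ∃ t : Fin n → ℝ, isInt t ∧ isReflexive0 ((fun x => x - t) '' P)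


open Pointwise in
/-- `P` is integrally closed: every lattice point of the dilate `mP` is a sum of `m`
lattice points of `P`. -/
def isIntegrallyClosed {n : ℕ} (P : Set (Fin n → ℝ)) : Prop :=
  ∀ m : ℕ, 0 < m → ∀ x ∈ (m : ℝ) • P, isInt x →
    ∃ f : Fin m → Fin n → ℝ, (∀ k, f k ∈ P ∧ isInt (f k)) ∧ x = ∑ k, f k


lemma stmt5_append_add {n m : ℕ} (u u' : Fin n → ℝ) (v v' : Fin m → ℝ) :
    Fin.append u v + Fin.append u' v' = Fin.append (u + u') (v + v') := by
  funext i
  refine Fin.addCases (fun j => ?_) (fun j => ?_) i <;>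
    simp [Fin.append_left, Fin.append_right]

lemma stmt5_smul_append {n m : ℕ} (c : ℝ) (u : Fin n → ℝ) (v : Fin m → ℝ) :
    c • Fin.append u v = Fin.append (c • u) (c • v) := by
  funext i
  refine Fin.addCases (fun j => ?_) (fun j => ?_) i <;>
    simp [Fin.append_left, Fin.append_right]

lemma stmt5_sum_append {k n m : ℕ} (f : Fin k → Fin n → ℝ) (g : Fin k → Fin m → ℝ) :
    ∑ j, Fin.append (f j) (g j) = Fin.append (∑ j, f j) (∑ j, g j) := by
  funext i
  refine Fin.addCases (fun j => ?_) (fun j => ?_) i <;>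
    simp [Finset.sum_apply, Fin.append_left, Fin.append_right]

lemma stmt5_isInt_append {n m : ℕ} {u : Fin n → ℝ} {v : Fin m → ℝ}
    (hu : isInt u) (hv : isInt v) : isInt (Fin.append u v) := by
  intro i
  refine Fin.addCases (motive := fun i => ∃ z : ℤ, Fin.append u v i = (z : ℝ))
    (fun j => ?_) (fun j => ?_) i
  · simpa only [Fin.append_left] using hu j
  · simpa only [Fin.append_right] using hv j

lemma stmt5_dot_int {n : ℕ} {x u : Fin n → ℝ} (hx : isInt x) (hu : isInt u) :
    ∃ z : ℤ, ∑ j, x j * u j = (z : ℝ) := by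
  choose zx hzx using hx
  choose zu hzu using hu
  refine ⟨∑ j, zx j * zu j, ?_⟩
  push_cast
  exact Finset.sum_congr rfl fun j _ => by rw [hzx, hzu]

lemma stmt5_dot_linear {n : ℕ} (x : Fin n → ℝ) :
    IsLinearMap ℝ (fun u : Fin n → ℝ => ∑ j, x j * u j) := by
  constructor
  · intro u v; simp [mul_add, Finset.sum_add_distrib]
  · intro c u; simp [Finset.mul_sum, smul_eq_mul, mul_left_comm]

lemma stmt5_bipolar {n : ℕ} {P : Set (Fin n → ℝ)} (hconv : Convex ℝ P)
    (hcl : IsClosed P) (h0 : (0 : Fin n → ℝ) ∈ P) {x : Fin n → ℝ}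
    (hx : ∀ u ∈ polarDual P, ∑ j, x j * u j ≤ 1) : x ∈ P := by
  by_contra hxP
  obtain ⟨f, u, hfu, hux⟩ := geometric_hahn_banach_closed_point hconv hcl hxP
  have hu0 : 0 < u := by simpa using hfu 0 h0
  set e : Fin n → Fin n → ℝ := fun i => fun j => if i = j then 1 else 0 with he
  have hf : ∀ z : Fin n → ℝ, f z = ∑ j, z j * f (e j) := by
    intro z
    conv_lhs => rw [pi_eq_sum_univ z]
    rw [map_sum]
    simp [smul_eq_mul, he]
  have hdot : ∀ z : Fin n → ℝ, ∑ j, z j * (u⁻¹ * f (e j)) = u⁻¹ * f z := by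
    intro z
    rw [hf z, Finset.mul_sum]
    exact Finset.sum_congr rfl fun j _ => by ring
  have hyP : (fun j => u⁻¹ * f (e j)) ∈ polarDual P := by
    intro z hz
    rw [hdot]
    rw [← div_eq_inv_mul]
    exact le_of_lt ((div_lt_one hu0).mpr (hfu z hz))
  have := hx _ hyP
  rw [hdot, ← div_eq_inv_mul] at this
  have := (div_le_one hu0).mp this
  linarith

lemma stmt5_round {n : ℕ} {P : Set (Fin n → ℝ)} (hconv : Convex ℝ P)
    (hcomp : IsCompact P) (h0 : (0 : Fin n → ℝ) ∈ P)
    (hdual : isLatticePolytope (polarDual P)) {x : Fin n → ℝ} (hx : isInt x)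
    {s : ℝ} (hs : 0 ≤ s) (hmem : ∃ p ∈ P, x = s • p) :
    ∃ p ∈ P, x = (⌊s⌋₊ : ℝ) • p := by
  obtain ⟨U, hUint, hU⟩ := hdual
  have key : ∀ u ∈ polarDual P, ∑ j, x j * u j ≤ (⌊s⌋₊ : ℝ) := by
    have hkeyU : ∀ u ∈ (U : Set (Fin n → ℝ)), ∑ j, x j * u j ≤ (⌊s⌋₊ : ℝ) := by
      intro u hu
      have huP : u ∈ polarDual P := by rw [hU]; exact subset_convexHull ℝ _ hu
      obtain ⟨p, hp, hxp⟩ := hmem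
      have h1 : ∑ j, p j * u j ≤ 1 := huP p hp
      have h3 : ∑ j, x j * u j ≤ s := by
        have h2 : ∑ j, x j * u j = s * ∑ j, p j * u j := by
          rw [hxp, Finset.mul_sum]
          exact Finset.sum_congr rfl fun j _ => by simp [smul_eq_mul]; ring
        rw [h2]
        calc s * ∑ j, p j * u j ≤ s * 1 := mul_le_mul_of_nonneg_left h1 hs
        _ = s := mul_one s
      obtain ⟨z, hz⟩ := stmt5_dot_int hx (hUint u hu)
      rw [hz] at h3 ⊢
      have hzle : z ≤ ⌊s⌋ := Int.le_floor.mpr h3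
      have : (z : ℝ) ≤ ((⌊s⌋ : ℤ) : ℝ) := by exact_mod_cast hzle
      rw [← Int.natCast_floor_eq_floor hs] at this
      exact_mod_cast this
    intro u hu
    rw [hU] at hu
    exact convexHull_min hkeyU (convex_halfSpace_le (stmt5_dot_linear x) _) hu
  by_cases ha : ⌊s⌋₊ = 0
  · have hneg : ∀ u ∈ polarDual P, ∑ j, x j * u j ≤ 0 := by
      intro u hu; have := key u hu; rwa [ha, Nat.cast_zero] at this
    have hxz : ∀ k : ℕ, ((k : ℝ)) • x ∈ P := by
      intro k
      apply stmt5_bipolar hconv hcomp.isClosed h0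
      intro u hu
      have : ∑ j, ((k : ℝ) • x) j * u j = (k : ℝ) * ∑ j, x j * u j := by
        rw [Finset.mul_sum]; exact Finset.sum_congr rfl fun j _ => by simp [smul_eq_mul]; ring
      rw [this]
      have := hneg u hu
      nlinarith [Nat.cast_nonneg (α := ℝ) k]
    obtain ⟨C, hC⟩ := hcomp.isBounded.exists_norm_le
    have hx0 : x = 0 := by
      by_contra hx0
      have hnorm : 0 < ‖x‖ := norm_pos_iff.mpr hx0
      obtain ⟨k, hk⟩ := exists_nat_gt (C / ‖x‖)
      have h4 := hC _ (hxz k)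
      rw [norm_smul, Real.norm_natCast] at h4
      have h5 := (div_lt_iff₀ hnorm).mp hk
      linarith
    exact ⟨0, h0, by rw [hx0, smul_zero]⟩
  · have hapos : (0 : ℝ) < (⌊s⌋₊ : ℝ) := by
      exact_mod_cast Nat.pos_of_ne_zero ha
    refine ⟨(⌊s⌋₊ : ℝ)⁻¹ • x, ?_, (smul_inv_smul₀ (ne_of_gt hapos) x).symm⟩
    apply stmt5_bipolar hconv hcomp.isClosed h0
    intro u hu
    have heq : ∑ j, ((⌊s⌋₊ : ℝ)⁻¹ • x) j * u j = (⌊s⌋₊ : ℝ)⁻¹ * ∑ j, x j * u j := by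
      rw [Finset.mul_sum]; exact Finset.sum_congr rfl fun j _ => by simp [smul_eq_mul]; ring
    rw [heq]
    calc (⌊s⌋₊ : ℝ)⁻¹ * ∑ j, x j * u j ≤ (⌊s⌋₊ : ℝ)⁻¹ * (⌊s⌋₊ : ℝ) :=
          mul_le_mul_of_nonneg_left (key u hu) (by positivity)
    _ = 1 := inv_mul_cancel₀ (ne_of_gt hapos)

lemma stmt5_decomp {n : ℕ} {P : Set (Fin n → ℝ)} (hic : isIntegrallyClosed P) (a : ℕ)
    {x : Fin n → ℝ} (hx : isInt x) (hmem : ∃ p ∈ P, x = (a : ℝ) • p) :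
    ∃ f : Fin a → Fin n → ℝ, (∀ k, f k ∈ P ∧ isInt (f k)) ∧ x = ∑ k, f k := by
  rcases Nat.eq_zero_or_pos a with rfl | hapos
  · obtain ⟨p, hp, rfl⟩ := hmem
    exact ⟨Fin.elim0, fun k => k.elim0, by simp⟩
  · obtain ⟨p, hp, hxp⟩ := hmem
    exact hic a hapos x (Set.mem_smul_set.mpr ⟨p, hp, hxp.symm⟩) hx

/-- If `P` and `Q` are integrally closed lattice simplices with `0` in the
interior of `P` and `P` reflexive, then the free sum simplex `P *ᵢ Q` is integrally
closed. -/
theorem stmt_5 (n m : ℕ) (v : Fin (n+1) → Fin n → ℝ) (w : Fin (m+1) → Fin m → ℝ)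
    (hv : AffineIndependent ℝ v) (hw : AffineIndependent ℝ w)
    (hvint : ∀ j, isInt (v j)) (hwint : ∀ k, isInt (w k))
    (hPrefl : isReflexive0 (convexHull ℝ (Set.range v)))
    (hPic : isIntegrallyClosed (convexHull ℝ (Set.range v)))
    (hQic : isIntegrallyClosed (convexHull ℝ (Set.range w)))
    (i : Fin (m+1)) :
    isIntegrallyClosed (convexHull ℝ
      ((fun p : Fin n → ℝ => Fin.append p (0 : Fin m → ℝ)) '' convexHull ℝ (Set.range v) ∪
       (fun q : Fin m → ℝ => Fin.append (0 : Fin n → ℝ) (q - w i)) ''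
         convexHull ℝ (Set.range w))) := by
  classical
  set P := convexHull ℝ (Set.range v) with hPdef
  set Q := convexHull ℝ (Set.range w) with hQdef
  obtain ⟨hPlat, hP0, hPdual⟩ := hPrefl
  have hPconv : Convex ℝ P := convex_convexHull ℝ _
  have hQconv : Convex ℝ Q := convex_convexHull ℝ _
  have hPcomp : IsCompact P := (Set.finite_range v).isCompact_convexHull ℝ
  have h0P : (0 : Fin n → ℝ) ∈ P := interior_subset hP0
  have hwiQ : w i ∈ Q := subset_convexHull ℝ _ ⟨i, rfl⟩
  intro N hN x hxmem hxint
  set A := (fun p : Fin n → ℝ => Fin.append p (0 : Fin m → ℝ)) '' P with hA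
  set B := (fun q : Fin m → ℝ => Fin.append (0 : Fin n → ℝ) (q - w i)) '' Q with hB
  have hAconv : Convex ℝ A := by
    rintro _ ⟨p, hp, rfl⟩ _ ⟨p', hp', rfl⟩ α β hα hβ hαβ
    refine ⟨α • p + β • p', hPconv hp hp' hα hβ hαβ, ?_⟩
    simp only [stmt5_smul_append, stmt5_append_add, smul_zero, add_zero]
  have hBconv : Convex ℝ B := by
    rintro _ ⟨q, hq, rfl⟩ _ ⟨q', hq', rfl⟩ α β hα hβ hαβ
    refine ⟨α • q + β • q', hQconv hq hq' hα hβ hαβ, ?_⟩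
    have h1 : α • (q - w i) + β • (q' - w i) = (α • q + β • q') - (α + β) • w i := by
      module
    rw [hαβ, one_smul] at h1
    simp only [stmt5_smul_append, stmt5_append_add, smul_zero, add_zero, h1]
  have hA0 : A.Nonempty := ⟨_, ⟨v 0, subset_convexHull ℝ _ ⟨0, rfl⟩, rfl⟩⟩
  have hB0 : B.Nonempty := ⟨_, ⟨w i, hwiQ, rfl⟩⟩
  rw [Set.mem_smul_set] at hxmem
  obtain ⟨z, hz, hxz⟩ := hxmem
  rw [Convex.convexHull_union hAconv hBconv hA0 hB0, mem_convexJoin] at hz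
  obtain ⟨aP, ⟨p, hp, rfl⟩, bQ, ⟨q, hq, rfl⟩, α, β, hα, hβ, hαβ, hzeq⟩ := hz
  set s : ℝ := N * α with hsdef
  set t : ℝ := N * β with htdef
  have hxeq : x = Fin.append (s • p) (t • (q - w i)) := by
    rw [← hxz, ← hzeq]
    simp only [smul_add, smul_smul, stmt5_smul_append, stmt5_append_add,
      smul_zero, add_zero, zero_add]
    rfl
  set x₁ : Fin n → ℝ := s • p with hx₁def
  set x₂ : Fin m → ℝ := t • (q - w i) with hx₂def
  have hx₁int : isInt x₁ := by
    intro j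
    have h := hxint (Fin.castAdd m j)
    rwa [hxeq, Fin.append_left] at h
  have hx₂int : isInt x₂ := by
    intro j
    have h := hxint (Fin.natAdd n j)
    rwa [hxeq, Fin.append_right] at h
  have hs0 : 0 ≤ s := mul_nonneg (Nat.cast_nonneg N) hα
  have ht0 : 0 ≤ t := mul_nonneg (Nat.cast_nonneg N) hβ
  have hst : s + t = N := by rw [hsdef, htdef, ← mul_add, hαβ, mul_one]
  set a : ℕ := ⌊s⌋₊ with hadef
  have has : (a : ℝ) ≤ s := Nat.floor_le hs0
  have haN : a ≤ N := by
    have : (a : ℝ) ≤ (N : ℝ) := by linarith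
    exact_mod_cast this
  set b : ℕ := N - a with hbdef
  have hab : a + b = N := Nat.add_sub_cancel' haN
  have hbr : (b : ℝ) = (N : ℝ) - a := by
    rw [hbdef, Nat.cast_sub haN]
  have htb : t ≤ (b : ℝ) := by rw [hbr]; linarith
  -- P side
  obtain ⟨p', hp', hx₁a⟩ := stmt5_round hPconv hPcomp h0P hPdual hx₁int hs0 ⟨p, hp, rfl⟩
  obtain ⟨f, hf, hsumf⟩ := stmt5_decomp hPic a hx₁int ⟨p', hp', hx₁a⟩
  -- Q side
  have hx₂b : ∃ q'' ∈ Q, x₂ + (b : ℝ) • w i = (b : ℝ) • q'' := by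
    by_cases hb0 : (b : ℝ) = 0
    · have ht00 : t = 0 := le_antisymm (hb0 ▸ htb) ht0
      exact ⟨w i, hwiQ, by rw [hx₂def, ht00, hb0]; simp⟩
    · have hbpos : (0 : ℝ) < b := lt_of_le_of_ne (Nat.cast_nonneg b) (Ne.symm hb0)
      have hdiv1 : t / b ≤ 1 := (div_le_one hbpos).mpr htb
      refine ⟨(t / b) • q + (1 - t / b) • w i,
        hQconv hq hwiQ (by positivity) (by linarith) (by ring), ?_⟩
      have hbt : (b : ℝ) * (t / b) = t := by field_simp
      have : (b : ℝ) • ((t / b) • q + (1 - t / b) • w i)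
          = ((b : ℝ) * (t / b)) • q + ((b : ℝ) - (b : ℝ) * (t / b)) • w i := by module
      rw [this, hbt, hx₂def]
      module
  have hx₂int' : isInt (x₂ + (b : ℝ) • w i) := by
    intro j
    obtain ⟨z1, hz1⟩ := hx₂int j
    obtain ⟨z2, hz2⟩ := hwint i j
    exact ⟨z1 + b * z2, by push_cast; simp [hz1, hz2]⟩
  obtain ⟨g0, hg0, hsumg0⟩ := stmt5_decomp hQic b hx₂int' hx₂b
  set g : Fin b → Fin m → ℝ := fun k => g0 k - w i with hgdef
  have hsumg : x₂ = ∑ k, g k := by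
    have h1 : ∑ k : Fin b, g k = (∑ k, g0 k) - (b : ℝ) • w i := by
      rw [hgdef, Finset.sum_sub_distrib, Finset.sum_const, Finset.card_univ,
        Fintype.card_fin]
      congr 1
      rw [← Nat.cast_smul_eq_nsmul ℝ]
    rw [h1, ← hsumg0]
    abel
  -- assemble
  set F : Fin N → Fin (n + m) → ℝ := fun k =>
    Fin.append (fun j : Fin a => Fin.append (f j) (0 : Fin m → ℝ))
      (fun j : Fin b => Fin.append (0 : Fin n → ℝ) (g j)) (Fin.cast hab.symm k) with hF
  refine ⟨F, ?_, ?_⟩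
  · intro k
    rw [hF]
    refine Fin.addCases (motive := fun idx =>
        Fin.append (fun j : Fin a => Fin.append (f j) (0 : Fin m → ℝ))
          (fun j : Fin b => Fin.append (0 : Fin n → ℝ) (g j)) idx ∈ convexHull ℝ (A ∪ B) ∧
        isInt (Fin.append (fun j : Fin a => Fin.append (f j) (0 : Fin m → ℝ))
          (fun j : Fin b => Fin.append (0 : Fin n → ℝ) (g j)) idx))
      (fun j => ?_) (fun j => ?_) (Fin.cast hab.symm k)
    · simp only [Fin.append_left]
      constructor
      · exact subset_convexHull ℝ _ (Or.inl ⟨f j, (hf j).1, rfl⟩)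
      · exact stmt5_isInt_append (hf j).2 (fun j2 => ⟨0, by simp⟩)
    · simp only [Fin.append_right]
      constructor
      · exact subset_convexHull ℝ _ (Or.inr ⟨g0 j, (hg0 j).1, rfl⟩)
      · refine stmt5_isInt_append (fun j2 => ⟨0, by simp⟩) ?_
        intro j2
        obtain ⟨z1, hz1⟩ := (hg0 j).2 j2
        obtain ⟨z2, hz2⟩ := hwint i j2
        exact ⟨z1 - z2, by push_cast; simp [hgdef, hz1, hz2]⟩
  · have h1 : ∑ k : Fin N, F k = ∑ idx : Fin (a + b),
        Fin.append (fun j : Fin a => Fin.append (f j) (0 : Fin m → ℝ))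
          (fun j : Fin b => Fin.append (0 : Fin n → ℝ) (g j)) idx := by
      rw [hF]
      exact Fintype.sum_equiv (finCongr hab.symm) _ _ (fun k => rfl)
    rw [h1, Fin.sum_univ_add]
    simp only [Fin.append_left, Fin.append_right]
    rw [stmt5_sum_append, stmt5_sum_append, stmt5_append_add]
    rw [Finset.sum_const, Finset.sum_const]
    simp only [smul_zero, add_zero, zero_add]
    rw [hxeq, ← hsumf, ← hsumg]
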